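/- Under the bootstrap null (i.i.d. labels, P(a)=p_a, P(b)=p_b=1−p_a), the covariance of R_{C₀} and n_a^B equals (N − K + |C₀|) · 2 p_a p_b (1 − 2 p_a). In particular the covariance vanishes when p_a = 1/2. -/

import Mathlib

open scoped Classical
open Finset

/-- Number of group-`a` subjects in category `k` under labeling `g`. -/
def aCnt {N K : ℕ} (c : Fin N → Fin K) (g : Fin N → Bool) (k : Fin K) : ℕ :=
  (univ.filter fun x => c x = k ∧ g x = true).card

/-- Number of group-`b` subjects in category `k` under labeling `g`. -/
def bCnt {N K : ℕ} (c : Fin N → Fin K) (g : Fin N → Bool) (k : Fin K) : ℕ :=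
  (univ.filter fun x => c x = k ∧ g x = false).card

/-- The statistic `R_{C₀}` (real-valued version; edge sum written as half the dart sum). -/
noncomputable def RC0 {N K : ℕ} (c : Fin N → Fin K) (C0 : SimpleGraph (Fin K))
    (m : Fin K → ℕ) (g : Fin N → Bool) : ℝ :=
  (∑ k, 2 * (aCnt c g k : ℝ) * (bCnt c g k : ℝ) / (m k : ℝ)) +
    (∑ dd : C0.Dart,
        ((aCnt c g dd.toProd.1 : ℝ) * (bCnt c g dd.toProd.2 : ℝ) +
          (aCnt c g dd.toProd.2 : ℝ) * (bCnt c g dd.toProd.1 : ℝ)) /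
          ((m dd.toProd.1 : ℝ) * (m dd.toProd.2 : ℝ))) / 2

/-- Expectation under the bootstrap null: each subject independently gets label `a`
with probability `p`, else `b`. -/
noncomputable def bootE {N : ℕ} (p : ℝ) (f : (Fin N → Bool) → ℝ) : ℝ :=
  ∑ g : Fin N → Bool, (∏ x, if g x = true then p else 1 - p) * f g

namespace Boot

variable {N : ℕ} (p : ℝ)

/-- indicator of g x = true -/
def Xf (i : Fin N) (g : Fin N → Bool) : ℝ := if g i then 1 else 0

def Df (i j : Fin N) (g : Fin N → Bool) : ℝ :=
  Xf i g * (1 - Xf j g) + Xf j g * (1 - Xf i g)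

lemma bootE_congr {f h : (Fin N → Bool) → ℝ} (hfh : ∀ g, f g = h g) :
    bootE p f = bootE p h := by
  unfold bootE; exact Finset.sum_congr rfl fun g _ => by rw [hfh]

lemma bootE_add (f h : (Fin N → Bool) → ℝ) :
    bootE p (fun g => f g + h g) = bootE p f + bootE p h := by
  unfold bootE; rw [← Finset.sum_add_distrib]
  exact Finset.sum_congr rfl fun g _ => by ring

lemma bootE_sum {ι : Type*} (s : Finset ι) (f : ι → (Fin N → Bool) → ℝ) :
    bootE p (fun g => ∑ i ∈ s, f i g) = ∑ i ∈ s, bootE p (f i) := by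
  unfold bootE
  rw [Finset.sum_comm]
  exact Finset.sum_congr rfl fun g _ => by rw [Finset.mul_sum]

lemma bootE_const_mul (r : ℝ) (f : (Fin N → Bool) → ℝ) :
    bootE p (fun g => r * f g) = r * bootE p f := by
  unfold bootE; rw [Finset.mul_sum]
  exact Finset.sum_congr rfl fun g _ => by ring

lemma bootE_prod (F : Fin N → Bool → ℝ) :
    bootE p (fun g => ∏ x, F x (g x)) = ∏ x, ((1 - p) * F x false + p * F x true) := by
  unfold bootE
  have h1 : ∀ g : Fin N → Bool,
      (∏ x, if g x = true then p else 1 - p) * ∏ x, F x (g x)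
        = ∏ x, ((if g x = true then p else 1 - p) * F x (g x)) := fun g =>
    (Finset.prod_mul_distrib).symm
  simp_rw [h1]
  have h2 : (∏ x : Fin N, ∑ b ∈ (Finset.univ : Finset Bool),
        ((if b = true then p else 1 - p) * F x b))
      = ∑ g ∈ Fintype.piFinset (fun _ : Fin N => (Finset.univ : Finset Bool)),
          ∏ x, ((if g x = true then p else 1 - p) * F x (g x)) :=
    Finset.prod_univ_sum _ _
  rw [Fintype.piFinset_univ] at h2
  rw [← h2]
  exact Finset.prod_congr rfl fun x _ => by simp [Fintype.sum_bool]; ring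

lemma bootE_prod_on (S : Finset (Fin N)) (F : Fin N → Bool → ℝ) :
    bootE p (fun g => ∏ x ∈ S, F x (g x)) = ∏ x ∈ S, ((1 - p) * F x false + p * F x true) := by
  set F' : Fin N → Bool → ℝ := fun x b => if x ∈ S then F x b else 1 with hF'
  have h1 : ∀ g : Fin N → Bool, (∏ x ∈ S, F x (g x)) = ∏ x, F' x (g x) := by
    intro g
    rw [← Finset.prod_subset (Finset.subset_univ S) (fun x _ hx => by simp [hF', hx])]
    exact Finset.prod_congr rfl fun x hx => by simp [hF', hx]
  rw [bootE_congr p h1, bootE_prod]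
  rw [← Finset.prod_subset (Finset.subset_univ S)
    (fun x _ hx => by simp [hF', hx])]
  exact Finset.prod_congr rfl fun x hx => by simp [hF', hx]

lemma bootE_X (i : Fin N) : bootE p (Xf i) = p := by
  set F : Fin N → Bool → ℝ := fun _ b => if b then 1 else 0 with hF
  have h1 : ∀ g : Fin N → Bool, Xf i g = ∏ x ∈ ({i} : Finset (Fin N)), F x (g x) := by
    intro g; simp [Xf, hF]
  rw [bootE_congr p h1, bootE_prod_on]
  simp [hF]

lemma bootE_XnotX {i j : Fin N} (h : i ≠ j) :
    bootE p (fun g => Xf i g * (1 - Xf j g)) = p * (1 - p) := by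
  set F : Fin N → Bool → ℝ := fun x b =>
    if x = i then (if b then 1 else 0) else (if b then 0 else 1) with hF
  have h1 : ∀ g : Fin N → Bool, Xf i g * (1 - Xf j g)
      = ∏ x ∈ ({i, j} : Finset (Fin N)), F x (g x) := by
    intro g
    rw [Finset.prod_pair h]
    cases hgi : g i <;> cases hgj : g j <;> simp [Xf, hF, hgi, hgj, h, Ne.symm h]
  rw [bootE_congr p h1, bootE_prod_on, Finset.prod_pair h]
  simp [hF, Ne.symm h]

lemma bootE_XnotXX {i j x : Fin N} (hij : i ≠ j) (hix : i ≠ x) (hjx : j ≠ x) :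
    bootE p (fun g => Xf i g * (1 - Xf j g) * Xf x g) = p * (1 - p) * p := by
  set F : Fin N → Bool → ℝ := fun y b =>
    if y = j then (if b then 0 else 1) else (if b then 1 else 0) with hF
  have h1 : ∀ g : Fin N → Bool, Xf i g * (1 - Xf j g) * Xf x g
      = ∏ y ∈ ({i, j, x} : Finset (Fin N)), F y (g y) := by
    intro g
    rw [Finset.prod_insert (by simp [hij, hix]), Finset.prod_pair hjx]
    cases hgi : g i <;> cases hgj : g j <;> cases hgx : g x <;>
      simp [Xf, hF, hgi, hgj, hgx, hij, hjx, Ne.symm hjx]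
  rw [bootE_congr p h1, bootE_prod_on,
    Finset.prod_insert (by simp [hij, hix]), Finset.prod_pair hjx]
  simp [hF, hij, Ne.symm hjx]
  ring

end Boot

namespace Boot
variable {N : ℕ} (p : ℝ)

lemma bootE_zero : bootE (N := N) p (fun _ => 0) = 0 := by
  simp [bootE]

lemma Df_self (i : Fin N) (g : Fin N → Bool) : Df i i g = 0 := by
  cases h : g i <;> simp [Df, Xf, h]

lemma bootE_D {i j : Fin N} (h : i ≠ j) : bootE p (Df i j) = 2 * (p * (1 - p)) := by
  have : bootE p (Df i j)
      = bootE p (fun g => Xf i g * (1 - Xf j g)) + bootE p (fun g => Xf j g * (1 - Xf i g)) :=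
    bootE_add p _ _
  rw [this, bootE_XnotX p h, bootE_XnotX p h.symm]; ring

lemma bootE_D_X {i j : Fin N} (h : i ≠ j) (x : Fin N) :
    bootE p (fun g => Df i j g * Xf x g)
      = if x = i ∨ x = j then p * (1 - p) else 2 * (p * (1 - p) * p) := by
  by_cases hxi : x = i
  · subst hxi
    have h1 : ∀ g : Fin N → Bool, Df x j g * Xf x g = Xf x g * (1 - Xf j g) := by
      intro g; cases hg : g x <;> cases hg2 : g j <;> simp [Df, Xf, hg, hg2]
    rw [bootE_congr p h1, bootE_XnotX p h]
    simp
  · by_cases hxj : x = j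
    · subst hxj
      have h1 : ∀ g : Fin N → Bool, Df i x g * Xf x g = Xf x g * (1 - Xf i g) := by
        intro g; cases hg : g x <;> cases hg2 : g i <;> simp [Df, Xf, hg, hg2]
      rw [bootE_congr p h1, bootE_XnotX p (Ne.symm h)]
      simp
    · have h1 : ∀ g : Fin N → Bool, Df i j g * Xf x g
          = Xf i g * (1 - Xf j g) * Xf x g + Xf j g * (1 - Xf i g) * Xf x g := by
        intro g; simp [Df]; ring
      rw [bootE_congr p h1, bootE_add,
        bootE_XnotXX p h (Ne.symm hxi) (Ne.symm hxj),
        bootE_XnotXX p h.symm (Ne.symm hxj) (Ne.symm hxi)]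
      simp [hxi, hxj]; ring

/-- expectation of the count -/
lemma bootE_n : bootE (N := N) p (fun g => ∑ x, Xf x g) = N * p := by
  rw [bootE_sum]
  simp [bootE_X]

/-- the per-pair covariance -/
lemma covD (i j : Fin N) :
    bootE p (fun g => Df i j g * (∑ x, Xf x g))
        - bootE p (Df i j) * bootE (N := N) p (fun g => ∑ x, Xf x g)
      = if i = j then 0 else 2 * (p * (1 - p)) * (1 - 2 * p) := by
  by_cases hij : i = j
  · subst hij
    have h0 : ∀ g : Fin N → Bool, Df i i g * (∑ x, Xf x g) = 0 := by
      intro g; rw [Df_self]; ring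
    have h0' : bootE p (Df i i) = 0 := by
      rw [bootE_congr p (Df_self i), bootE_zero]
    rw [bootE_congr p h0, bootE_zero, h0']
    simp
  · have h1 : ∀ g : Fin N → Bool, Df i j g * (∑ x, Xf x g)
        = ∑ x, Df i j g * Xf x g := fun g => Finset.mul_sum _ _ _
    rw [bootE_congr p h1, bootE_sum, bootE_n, bootE_D p hij]
    have h2 : ∀ x : Fin N, bootE p (fun g => Df i j g * Xf x g)
        = 2 * (p * (1 - p) * p)
          + ((if x = i then (1:ℝ) else 0) + (if x = j then (1:ℝ) else 0))
            * (p * (1 - p) - 2 * (p * (1 - p) * p)) := by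
      intro x
      rw [bootE_D_X p hij x]
      by_cases hxi : x = i
      · subst hxi; rw [if_pos (Or.inl rfl), if_pos rfl, if_neg hij]; ring
      · by_cases hxj : x = j
        · subst hxj; rw [if_pos (Or.inr rfl), if_neg hxi, if_pos rfl]; ring
        · rw [if_neg (by tauto), if_neg hxi, if_neg hxj]; ring
    simp_rw [h2]
    rw [Finset.sum_add_distrib, Finset.sum_const, ← Finset.sum_mul, Finset.sum_add_distrib,
      Finset.sum_ite_eq' Finset.univ i (fun _ => (1:ℝ)),
      Finset.sum_ite_eq' Finset.univ j (fun _ => (1:ℝ))]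
    rw [if_neg hij]
    simp [Finset.card_univ, nsmul_eq_mul]
    ring
end Boot

namespace Boot
variable {N K : ℕ} (p : ℝ)

def nA {N : ℕ} (g : Fin N → Bool) : ℝ := ∑ x, Xf x g

noncomputable def covB {N : ℕ} (p : ℝ) (f : (Fin N → Bool) → ℝ) : ℝ :=
  bootE p (fun g => f g * nA g) - bootE p f * bootE p (nA (N := N))

lemma covB_congr {f h : (Fin N → Bool) → ℝ} (hfh : ∀ g, f g = h g) :
    covB p f = covB p h := by
  have : f = h := funext hfh
  rw [this]

lemma covB_D (i j : Fin N) :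
    covB p (Df i j) = if i = j then 0 else 2 * (p * (1 - p)) * (1 - 2 * p) := by
  have h := covD p i j
  exact h

lemma covB_sum {ι : Type*} (s : Finset ι) (f : ι → (Fin N → Bool) → ℝ) :
    covB p (fun g => ∑ i ∈ s, f i g) = ∑ i ∈ s, covB p (f i) := by
  unfold covB
  rw [bootE_congr p (fun g => Finset.sum_mul s (fun i => f i g) (nA g)),
    bootE_sum, bootE_sum, Finset.sum_mul, ← Finset.sum_sub_distrib]

lemma covB_add (f h : (Fin N → Bool) → ℝ) :
    covB p (fun g => f g + h g) = covB p f + covB p h := by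
  unfold covB
  have h1 : ∀ g, (f g + h g) * nA g = f g * nA g + h g * nA g := fun g => by ring
  rw [bootE_congr p h1, bootE_add, bootE_add]
  ring

lemma covB_const_mul (r : ℝ) (f : (Fin N → Bool) → ℝ) :
    covB p (fun g => r * f g) = r * covB p f := by
  unfold covB
  have h1 : ∀ g, (r * f g) * nA g = r * (f g * nA g) := fun g => by ring
  rw [bootE_congr p h1, bootE_const_mul, bootE_const_mul]
  ring

lemma cast_card (g : Fin N → Bool) :
    ((univ.filter fun x => g x = true).card : ℝ) = nA g := by
  rw [Finset.card_filter]
  push_cast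
  exact Finset.sum_congr rfl fun x _ => by cases h : g x <;> simp [Xf, h]

lemma cast_aCnt (c : Fin N → Fin K) (g : Fin N → Bool) (k : Fin K) :
    (aCnt c g k : ℝ) = ∑ x ∈ univ.filter (fun x => c x = k), Xf x g := by
  unfold aCnt
  rw [Finset.card_filter, Finset.sum_filter]
  push_cast
  refine Finset.sum_congr rfl fun x _ => ?_
  by_cases hc : c x = k <;> cases hg : g x <;> simp [Xf, hc, hg]

lemma cast_bCnt (c : Fin N → Fin K) (g : Fin N → Bool) (k : Fin K) :
    (bCnt c g k : ℝ) = ∑ x ∈ univ.filter (fun x => c x = k), (1 - Xf x g) := by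
  unfold bCnt
  rw [Finset.card_filter, Finset.sum_filter]
  push_cast
  refine Finset.sum_congr rfl fun x _ => ?_
  by_cases hc : c x = k <;> cases hg : g x <;> simp [Xf, hc, hg]

lemma twoAB (c : Fin N → Fin K) (g : Fin N → Bool) (k : Fin K) :
    2 * (aCnt c g k : ℝ) * (bCnt c g k : ℝ)
      = ∑ i ∈ univ.filter (fun x => c x = k), ∑ j ∈ univ.filter (fun x => c x = k),
          Df i j g := by
  set S := univ.filter (fun x => c x = k) with hS
  have hAB : (∑ i ∈ S, Xf i g) * (∑ j ∈ S, (1 - Xf j g))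
      = ∑ i ∈ S, ∑ j ∈ S, Xf i g * (1 - Xf j g) := Finset.sum_mul_sum S S _ _
  have hswap : (∑ i ∈ S, ∑ j ∈ S, Xf j g * (1 - Xf i g))
      = ∑ i ∈ S, ∑ j ∈ S, Xf i g * (1 - Xf j g) := Finset.sum_comm
  have hD : (∑ i ∈ S, ∑ j ∈ S, Df i j g)
      = (∑ i ∈ S, ∑ j ∈ S, Xf i g * (1 - Xf j g))
        + (∑ i ∈ S, ∑ j ∈ S, Xf j g * (1 - Xf i g)) := by
    rw [← Finset.sum_add_distrib]
    refine Finset.sum_congr rfl fun i _ => ?_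
    rw [← Finset.sum_add_distrib]
    exact Finset.sum_congr rfl fun j _ => rfl
  rw [cast_aCnt, cast_bCnt, hD, hswap, ← hAB, ← hS]
  ring

lemma crossAB (c : Fin N → Fin K) (g : Fin N → Bool) (u v : Fin K) :
    (aCnt c g u : ℝ) * (bCnt c g v : ℝ) + (aCnt c g v : ℝ) * (bCnt c g u : ℝ)
      = ∑ i ∈ univ.filter (fun x => c x = u), ∑ j ∈ univ.filter (fun x => c x = v),
          Df i j g := by
  set S := univ.filter (fun x => c x = u) with hS
  set T := univ.filter (fun x => c x = v) with hT
  have h1 : (∑ i ∈ S, Xf i g) * (∑ j ∈ T, (1 - Xf j g))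
      = ∑ i ∈ S, ∑ j ∈ T, Xf i g * (1 - Xf j g) := Finset.sum_mul_sum S T _ _
  have h2 : (∑ i ∈ T, Xf i g) * (∑ j ∈ S, (1 - Xf j g))
      = ∑ i ∈ S, ∑ j ∈ T, Xf j g * (1 - Xf i g) := by
    rw [Finset.sum_mul_sum T S _ _]
    exact Finset.sum_comm
  have hD : (∑ i ∈ S, ∑ j ∈ T, Df i j g)
      = (∑ i ∈ S, ∑ j ∈ T, Xf i g * (1 - Xf j g))
        + (∑ i ∈ S, ∑ j ∈ T, Xf j g * (1 - Xf i g)) := by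
    rw [← Finset.sum_add_distrib]
    refine Finset.sum_congr rfl fun i _ => ?_
    rw [← Finset.sum_add_distrib]
    exact Finset.sum_congr rfl fun j _ => rfl
  rw [cast_aCnt, cast_bCnt, cast_aCnt, cast_bCnt, hD, ← h1, ← h2, ← hS, ← hT]

end Boot

namespace Boot
variable {N K : ℕ} (p : ℝ)

lemma sum_offdiag (S : Finset (Fin N)) (cst : ℝ) :
    (∑ i ∈ S, ∑ j ∈ S, (if i = j then 0 else cst))
      = (S.card : ℝ) * ((S.card : ℝ) - 1) * cst := by
  have h1 : ∀ i ∈ S, (∑ j ∈ S, (if i = j then (0:ℝ) else cst)) = ((S.card : ℝ) - 1) * cst := by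
    intro i hi
    have h2 : ∀ j ∈ S, (if i = j then (0:ℝ) else cst) = cst - (if i = j then cst else 0) := by
      intro j _; by_cases h : i = j <;> simp [h]
    rw [Finset.sum_congr rfl h2, Finset.sum_sub_distrib, Finset.sum_const,
      Finset.sum_ite_eq S i (fun _ => cst), if_pos hi]
    simp [nsmul_eq_mul]
    ring
  rw [Finset.sum_congr rfl h1, Finset.sum_const]
  simp [nsmul_eq_mul]
  ring

end Boot

/-- Under the bootstrap null with `P(a) = p_a`, the covariance of `R_{C₀}` and
`n_a^B = Σ_x 1{g_x = a}` equals `(N - K + |C₀|) · 2 p_a p_b (1 - 2 p_a)`. -/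
theorem bootstrap_cov_RC0_naB (K N : ℕ) (p : ℝ) (hp0 : 0 ≤ p) (hp1 : p ≤ 1)
    (c : Fin N → Fin K) (C0 : SimpleGraph (Fin K)) (m : Fin K → ℕ)
    (hm : ∀ k, m k = (univ.filter fun x => c x = k).card) (hmk : ∀ k, 0 < m k) :
    bootE p (fun g => RC0 c C0 m g * ((univ.filter fun x => g x = true).card : ℝ)) -
        bootE p (fun g => RC0 c C0 m g) *
          bootE (N := N) p (fun g => ((univ.filter fun x => g x = true).card : ℝ)) =
      ((N : ℝ) - (K : ℝ) + (C0.edgeFinset.card : ℝ)) * (2 * p * (1 - p) * (1 - 2 * p)) := by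
  classical
  set S : Fin K → Finset (Fin N) := fun k => univ.filter fun x => c x = k with hSdef
  have hmne : ∀ k, (m k : ℝ) ≠ 0 := fun k => Nat.cast_ne_zero.mpr (hmk k).ne'
  have hcard : ∀ k, ((S k).card : ℝ) = (m k : ℝ) := fun k => by rw [hm k]
  -- rewrite the LHS as a covariance of RC0 against nA
  have hLHS : bootE p (fun g => RC0 c C0 m g * ((univ.filter fun x => g x = true).card : ℝ)) -
        bootE p (fun g => RC0 c C0 m g) *
          bootE (N := N) p (fun g => ((univ.filter fun x => g x = true).card : ℝ))
      = Boot.covB p (RC0 c C0 m) := by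
    unfold Boot.covB
    congr 1
    · exact Boot.bootE_congr p fun g => by rw [Boot.cast_card]
    · congr 1
      exact Boot.bootE_congr p fun g => Boot.cast_card g
  rw [hLHS]
  -- rewrite RC0 as a linear combination of the pair statistics Df
  have hRC0 : ∀ g, RC0 c C0 m g
      = (∑ k, (1 / (m k : ℝ)) * (∑ i ∈ S k, ∑ j ∈ S k, Boot.Df i j g))
        + ∑ d : C0.Dart, (1 / (2 * (m d.toProd.1 : ℝ) * (m d.toProd.2 : ℝ))) *
            (∑ i ∈ S d.toProd.1, ∑ j ∈ S d.toProd.2, Boot.Df i j g) := by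
    intro g
    unfold RC0
    rw [Finset.sum_div]
    congr 1
    · refine Finset.sum_congr rfl fun k _ => ?_
      rw [Boot.twoAB c g k]
      ring
    · refine Finset.sum_congr rfl fun d _ => ?_
      rw [Boot.crossAB c g d.toProd.1 d.toProd.2]
      ring
  rw [Boot.covB_congr p hRC0, Boot.covB_add, Boot.covB_sum, Boot.covB_sum]
  -- within-category terms
  have hterm1 : ∀ k : Fin K,
      Boot.covB p (fun g => (1 / (m k : ℝ)) * (∑ i ∈ S k, ∑ j ∈ S k, Boot.Df i j g))
        = ((m k : ℝ) - 1) * (2 * (p * (1 - p)) * (1 - 2 * p)) := by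
    intro k
    rw [Boot.covB_const_mul, Boot.covB_sum]
    have h2 : (∑ i ∈ S k, Boot.covB p (fun g => ∑ j ∈ S k, Boot.Df i j g))
        = ∑ i ∈ S k, ∑ j ∈ S k,
            (if i = j then (0:ℝ) else 2 * (p * (1 - p)) * (1 - 2 * p)) := by
      refine Finset.sum_congr rfl fun i _ => ?_
      rw [Boot.covB_sum]
      exact Finset.sum_congr rfl fun j _ => Boot.covB_D p i j
    rw [h2, Boot.sum_offdiag, hcard k]
    field_simp [hmne k]
  -- dart terms
  have hterm2 : ∀ d : C0.Dart,
      Boot.covB p (fun g => (1 / (2 * (m d.toProd.1 : ℝ) * (m d.toProd.2 : ℝ))) *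
          (∑ i ∈ S d.toProd.1, ∑ j ∈ S d.toProd.2, Boot.Df i j g))
        = (2 * (p * (1 - p)) * (1 - 2 * p)) / 2 := by
    intro d
    have hne : d.toProd.1 ≠ d.toProd.2 := d.adj.ne
    rw [Boot.covB_const_mul, Boot.covB_sum]
    have h2 : (∑ i ∈ S d.toProd.1, Boot.covB p (fun g => ∑ j ∈ S d.toProd.2, Boot.Df i j g))
        = ∑ i ∈ S d.toProd.1, ∑ j ∈ S d.toProd.2, (2 * (p * (1 - p)) * (1 - 2 * p)) := by
      refine Finset.sum_congr rfl fun i hi => ?_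
      rw [Boot.covB_sum]
      refine Finset.sum_congr rfl fun j hj => ?_
      have hci : c i = d.toProd.1 := (Finset.mem_filter.mp hi).2
      have hcj : c j = d.toProd.2 := (Finset.mem_filter.mp hj).2
      have hij : i ≠ j := fun h => hne (by rw [← hci, ← hcj, h])
      rw [Boot.covB_D, if_neg hij]
    rw [h2, Finset.sum_const, Finset.sum_const, nsmul_eq_mul, nsmul_eq_mul, hcard, hcard]
    field_simp [hmne d.toProd.1, hmne d.toProd.2]
  rw [Finset.sum_congr rfl fun k _ => hterm1 k, Finset.sum_congr rfl fun d _ => hterm2 d]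
  -- evaluate the two remaining sums
  have hsum_m : (∑ k, (m k : ℝ)) = (N : ℝ) := by
    have h := Finset.card_eq_sum_card_fiberwise
      (f := c) (s := (univ : Finset (Fin N))) (t := (univ : Finset (Fin K)))
      (fun x _ => Finset.mem_univ (c x))
    have h2 : (∑ k, m k) = N := by
      simp_rw [hm]
      rw [← h, Finset.card_univ, Fintype.card_fin]
    rw [← Nat.cast_sum, h2]
  have hw : (∑ k, ((m k : ℝ) - 1) * (2 * (p * (1 - p)) * (1 - 2 * p)))
      = ((N : ℝ) - (K : ℝ)) * (2 * (p * (1 - p)) * (1 - 2 * p)) := by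
    rw [← Finset.sum_mul]
    congr 1
    rw [Finset.sum_sub_distrib, hsum_m, Finset.sum_const, Finset.card_univ, Fintype.card_fin]
    simp
  have hd : (∑ _d : C0.Dart, (2 * (p * (1 - p)) * (1 - 2 * p)) / 2)
      = (C0.edgeFinset.card : ℝ) * (2 * (p * (1 - p)) * (1 - 2 * p)) := by
    rw [Finset.sum_const, Finset.card_univ, SimpleGraph.dart_card_eq_twice_card_edges,
      nsmul_eq_mul]
    push_cast
    ring
  rw [hw, hd]
  ring
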